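/- arXiv:1404.3862 — 3 statements merged into one kernel-verified Lean document; each statement's English description precedes it below -/
import Mathlib

section
/- Let f(z;θ) be a family of probability density functions on ℝ, parameterized by θ ∈ ℝ^k, each supported in [-b,b], and let α ∈ (0,1). Assume: f(·;θ) is continuous for each θ; ∂f(z;θ)/∂θ_j exists, is bounded, and is continuous in z, so that differentiation under the integral sign is valid; the α-VaR ν_α(θ) and the α-CVaR Φ_α(θ) = α^{-1}∫_{-b}^{ν_α(θ)} z f(z;θ)dz are differentiable in θ_j; and ∫_{-b}^{ν_α(θ)} f(z;θ)dz = α for all θ. Then for each 1 ≤ j ≤ k: ∂Φ_α(θ)/∂θ_j = α^{-1}∫_{-b}^{ν_α(θ)} (∂f(z;θ)/∂θ_j)·(z − ν_α(θ)) dz. -/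
open MeasureTheory Set intervalIntegral

lemma key_lemma (a : ℝ) (φ : ℝ → ℝ → ℝ) (u : ℝ → ℝ) (u' t₀ D M : ℝ)
    (hM : 0 ≤ M)
    (hφc : ∀ t, Continuous (φ t))
    (hLip : ∀ t z, |φ t z - φ t₀ z| ≤ M * |t - t₀|)
    (hu : HasDerivAt u u' t₀)
    (hD : HasDerivAt (fun t => ∫ z in a..u t₀, φ t z) D t₀) :
    HasDerivAt (fun t => ∫ z in a..u t, φ t z) (D + u' * φ t₀ (u t₀)) t₀ := by
  -- middle term: FTC
  have hB : HasDerivAt (fun t => ∫ z in (u t₀)..u t, φ t₀ z) (u' * φ t₀ (u t₀)) t₀ := by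
    have hF : HasDerivAt (fun x => ∫ z in (u t₀)..x, φ t₀ z) (φ t₀ (u t₀)) (u t₀) :=
      intervalIntegral.integral_hasDerivAt_right
        ((hφc t₀).intervalIntegrable _ _)
        ((hφc t₀).stronglyMeasurableAtFilter _ _)
        (hφc t₀).continuousAt
    have := hF.comp t₀ hu
    simpa [mul_comm, Function.comp_def] using this
  -- remainder term: little-o
  have hR : HasDerivAt (fun t => ∫ z in (u t₀)..u t, (φ t z - φ t₀ z)) 0 t₀ := by
    rw [hasDerivAt_iff_isLittleO]
    simp only [intervalIntegral.integral_same, sub_zero, smul_zero]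
    rw [Asymptotics.isLittleO_iff]
    intro ε hε
    have hcont : Filter.Tendsto u (nhds t₀) (nhds (u t₀)) := hu.continuousAt
    have hev : ∀ᶠ t in nhds t₀, |u t - u t₀| ≤ ε / (M + 1) := by
      have h2 : ∀ᶠ y in nhds (u t₀), dist y (u t₀) ≤ ε / (M + 1) := by
        filter_upwards [Metric.closedBall_mem_nhds (u t₀)
          (by positivity : (0:ℝ) < ε / (M + 1))] with y hy
        exact Metric.mem_closedBall.mp hy
      simpa [Real.dist_eq] using hcont.eventually h2
    filter_upwards [hev] with t ht
    have hbound : ‖∫ z in (u t₀)..u t, (φ t z - φ t₀ z)‖ ≤ (M * |t - t₀|) * |u t - u t₀| := by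
      apply intervalIntegral.norm_integral_le_of_norm_le_const
      intro z _
      simpa [Real.norm_eq_abs] using hLip t z
    calc ‖∫ z in (u t₀)..u t, (φ t z - φ t₀ z)‖
        ≤ (M * |t - t₀|) * |u t - u t₀| := hbound
      _ ≤ (M * |t - t₀|) * (ε / (M + 1)) := by
          apply mul_le_mul_of_nonneg_left ht (by positivity)
      _ ≤ ε * |t - t₀| := by
          rw [div_eq_mul_inv]
          have h1 : M * (M + 1)⁻¹ ≤ 1 := by
            rw [mul_inv_le_iff₀ (by linarith)]; linarith
          have h2 := mul_le_mul_of_nonneg_left h1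
            (mul_nonneg hε.le (abs_nonneg (t - t₀)))
          calc M * |t - t₀| * (ε / (M + 1))
              = ε * |t - t₀| * (M * (M + 1)⁻¹) := by ring
            _ ≤ ε * |t - t₀| * 1 := h2
            _ = ε * |t - t₀| := by ring
      _ = ε * ‖t - t₀‖ := by rw [Real.norm_eq_abs]
  have htotal := (hD.add hB).add hR
  have heq : (fun t => ((∫ z in a..u t₀, φ t z) + ∫ z in (u t₀)..u t, φ t₀ z)
      + ∫ z in (u t₀)..u t, (φ t z - φ t₀ z)) = fun t => ∫ z in a..u t, φ t z := by
    funext t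
    have i1 : IntervalIntegrable (φ t) volume (u t₀) (u t) := (hφc t).intervalIntegrable _ _
    have i2 : IntervalIntegrable (φ t₀) volume (u t₀) (u t) := (hφc t₀).intervalIntegrable _ _
    have hsub : (∫ z in (u t₀)..u t, (φ t z - φ t₀ z))
        = (∫ z in (u t₀)..u t, φ t z) - ∫ z in (u t₀)..u t, φ t₀ z :=
      intervalIntegral.integral_sub i1 i2
    have hadd : (∫ z in a..u t₀, φ t z) + (∫ z in (u t₀)..u t, φ t z)
        = ∫ z in a..u t, φ t z :=
      intervalIntegral.integral_add_adjacent_intervals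
        ((hφc t).intervalIntegrable _ _) ((hφc t).intervalIntegrable _ _)
    rw [hsub]; linarith [hadd]
  rw [← heq]
  rw [add_zero] at htotal; exact htotal


/-- Combining the two Leibniz-rule identities: for the α-CVaR
`Φ(θ) = α⁻¹ ∫_{-b}^{ν(θ)} z f(z;θ) dz` of a parameterized family of densities `f(·;θ)`
supported in `[-b,b]`, one has
`∂Φ(θ)/∂θ_j = α⁻¹ ∫_{-b}^{ν(θ)} (∂f(z;θ)/∂θ_j)·(z − ν(θ)) dz`. -/
theorem stmt_3 (k : ℕ) (b : ℝ) (α : ℝ) (hα : α ∈ Set.Ioo (0:ℝ) 1)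
    (f : (Fin k → ℝ) → ℝ → ℝ) (f' : (Fin k → ℝ) → Fin k → ℝ → ℝ)
    (ν : (Fin k → ℝ) → ℝ) (ν' : (Fin k → ℝ) → Fin k → ℝ)
    (Φ : (Fin k → ℝ) → ℝ) (Φ' : (Fin k → ℝ) → Fin k → ℝ)
    -- `f(·;θ)` is a probability density supported in `[-b,b]`
    (hf_nonneg : ∀ θ z, 0 ≤ f θ z)
    (hf_supp : ∀ θ z, z ∉ Set.Icc (-b) b → f θ z = 0)
    (hf_int : ∀ θ, ∫ z in (-b)..b, f θ z = 1)
    -- `f(·;θ)` is continuous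
    (hf_cont : ∀ θ, Continuous (f θ))
    -- `∂f(z;θ)/∂θ_j` exists, is bounded, and is continuous in `z`
    (hf' : ∀ θ j z, HasDerivAt (fun t => f (Function.update θ j t) z) (f' θ j z) (θ j))
    (hf'_bdd : ∃ M, ∀ θ j z, |f' θ j z| ≤ M)
    (hf'_cont : ∀ θ j, Continuous (f' θ j))
    -- differentiation under the integral sign is valid
    (hDUI : ∀ θ j c, HasDerivAt (fun t => ∫ z in (-b)..c, f (Function.update θ j t) z)
      (∫ z in (-b)..c, f' θ j z) (θ j))
    (hDUI2 : ∀ θ j c, HasDerivAt (fun t => ∫ z in (-b)..c, z * f (Function.update θ j t) z)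
      (∫ z in (-b)..c, z * f' θ j z) (θ j))
    -- the α-VaR and its differentiability in `θ_j`
    (hν : ∀ θ, ν θ = sInf {z | α ≤ ∫ u in (-b)..z, f θ u})
    (hν' : ∀ θ j, HasDerivAt (fun t => ν (Function.update θ j t)) (ν' θ j) (θ j))
    -- level condition: `∫_{-b}^{ν(θ)} f(z;θ) dz = α` for all `θ`
    (hlevel : ∀ θ, ∫ z in (-b)..(ν θ), f θ z = α)
    -- the α-CVaR and its differentiability in `θ_j`
    (hΦ : ∀ θ, Φ θ = α⁻¹ * ∫ z in (-b)..(ν θ), z * f θ z)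
    (hΦ' : ∀ θ j, HasDerivAt (fun t => Φ (Function.update θ j t)) (Φ' θ j) (θ j)) :
    ∀ (θ : Fin k → ℝ) (j : Fin k),
      Φ' θ j = α⁻¹ * ∫ z in (-b)..(ν θ), f' θ j z * (z - ν θ) := by
  intro θ j
  obtain ⟨M, hM⟩ := hf'_bdd
  have hM0 : 0 ≤ M := le_trans (abs_nonneg _) (hM θ j 0)
  have ht0 : Function.update θ j (θ j) = θ := Function.update_eq_self j θ
  -- Lipschitz-in-t estimate for f via the mean value inequality
  have lip : ∀ t z, |f (Function.update θ j t) z - f θ z| ≤ M * |t - θ j| := by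
    intro t z
    have hderiv : ∀ x ∈ (Set.univ : Set ℝ), HasDerivWithinAt
        (fun s => f (Function.update θ j s) z) (f' (Function.update θ j x) j z) Set.univ x := by
      intro x _
      have h := hf' (Function.update θ j x) j z
      simp only [Function.update_idem, Function.update_self] at h
      exact h.hasDerivWithinAt
    have hbd : ∀ x ∈ (Set.univ : Set ℝ), ‖f' (Function.update θ j x) j z‖ ≤ M := by
      intro x _; simpa [Real.norm_eq_abs] using hM _ j z
    have := Convex.norm_image_sub_le_of_norm_hasDerivWithin_le hderiv hbd convex_univ
      (Set.mem_univ (θ j)) (Set.mem_univ t)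
    simpa [Real.norm_eq_abs, ht0] using this
  have lip2 : ∀ t z, |z * f (Function.update θ j t) z - z * f θ z| ≤ (|b| * M) * |t - θ j| := by
    intro t z
    by_cases hz : z ∈ Set.Icc (-b) b
    · have hzb : |z| ≤ |b| :=
        abs_le.mpr ⟨by linarith [le_abs_self b, hz.1], by linarith [le_abs_self b, hz.2]⟩
      calc |z * f (Function.update θ j t) z - z * f θ z|
          = |z| * |f (Function.update θ j t) z - f θ z| := by rw [← abs_mul, mul_sub]
        _ ≤ |b| * (M * |t - θ j|) :=
            mul_le_mul hzb (lip t z) (abs_nonneg _) (abs_nonneg b)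
        _ = (|b| * M) * |t - θ j| := by ring
    · rw [hf_supp _ z hz, hf_supp θ z hz]
      simp only [mul_zero, sub_zero, abs_zero]
      positivity
  -- differentiate the level condition
  have h1 := key_lemma (-b) (fun t z => f (Function.update θ j t) z)
      (fun t => ν (Function.update θ j t)) (ν' θ j) (θ j)
      (∫ z in (-b)..ν (Function.update θ j (θ j)), f' θ j z) M hM0
      (fun t => hf_cont _)
      (by intro t z; simpa [ht0] using lip t z)
      (hν' θ j)
      (hDUI θ j (ν (Function.update θ j (θ j))))
  simp only [ht0] at h1
  have hconst : (fun t => ∫ z in (-b)..ν (Function.update θ j t), f (Function.update θ j t) z)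
      = fun _ => α := funext fun t => hlevel _
  rw [hconst] at h1
  have eqA : (∫ z in (-b)..ν θ, f' θ j z) + ν' θ j * f θ (ν θ) = 0 :=
    h1.unique (hasDerivAt_const _ _)
  -- differentiate the CVaR integral
  have h2 := key_lemma (-b) (fun t z => z * f (Function.update θ j t) z)
      (fun t => ν (Function.update θ j t)) (ν' θ j) (θ j)
      (∫ z in (-b)..ν (Function.update θ j (θ j)), z * f' θ j z) (|b| * M)
      (by positivity)
      (fun t => continuous_id.mul (hf_cont _))
      (by intro t z; simpa [ht0] using lip2 t z)
      (hν' θ j)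
      (hDUI2 θ j (ν (Function.update θ j (θ j))))
  simp only [ht0] at h2
  have hΦfun : (fun t => Φ (Function.update θ j t))
      = fun t => α⁻¹ * ∫ z in (-b)..ν (Function.update θ j t), z * f (Function.update θ j t) z :=
    funext fun t => hΦ _
  have hd := hΦ' θ j
  rw [hΦfun] at hd
  have hΦeq : Φ' θ j = α⁻¹ * ((∫ z in (-b)..ν θ, z * f' θ j z)
      + ν' θ j * (ν θ * f θ (ν θ))) := hd.unique (h2.const_mul α⁻¹)
  -- algebra
  have ia : IntervalIntegrable (fun z => z * f' θ j z) volume (-b) (ν θ) :=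
    (continuous_id.mul (hf'_cont θ j)).intervalIntegrable _ _
  have ib : IntervalIntegrable (fun z => f' θ j z * ν θ) volume (-b) (ν θ) :=
    ((hf'_cont θ j).mul continuous_const).intervalIntegrable _ _
  have key3 : (∫ z in (-b)..ν θ, f' θ j z * (z - ν θ))
      = (∫ z in (-b)..ν θ, z * f' θ j z) - (∫ z in (-b)..ν θ, f' θ j z * ν θ) := by
    rw [← intervalIntegral.integral_sub ia ib]
    apply intervalIntegral.integral_congr
    intro z _; ring
  rw [hΦeq, key3, intervalIntegral.integral_mul_const]
  linear_combination (α⁻¹ * ν θ) * eqA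
end

section
/- (Proposition 1: CVaR gradient formula, 1-dimensional case.) Let Z be a continuous real random variable bounded in [-b,b] whose probability density function f_Z(z;θ) is parameterized by θ ∈ ℝ^k, and let α ∈ (0,1). Assume: for all θ and 1 ≤ j ≤ k, the partial derivatives ∂ν_α(Z;θ)/∂θ_j and ∂Φ_α(Z;θ)/∂θ_j exist and are bounded; for all θ, z, and j, (∂f_Z(z;θ)/∂θ_j)/f_Z(z;θ) exists and is bounded; f_Z(·;θ) is continuous and ∂f_Z(z;θ)/∂θ_j is bounded and continuous in z so that differentiation under the integral sign is valid; and ∫_{-b}^{ν_α(Z;θ)} f_Z(z;θ)dz = α for all θ. Then ∂Φ_α(Z;θ)/∂θ_j = E^θ[ (∂ log f_Z(Z;θ)/∂θ_j)·(Z − ν_α(Z;θ)) | Z ≤ ν_α(Z;θ) ]. -/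
open MeasureTheory Set intervalIntegral

open Topology Filter in
lemma comp_deriv_aux {φ : ℝ → ℝ → ℝ} {a t₀ : ℝ} {c : ℝ → ℝ} {c' D L : ℝ}
    (hc : HasDerivAt c c' t₀)
    (hφc : ∀ t, Continuous (φ t))
    (hA : HasDerivAt (fun t => ∫ z in a..(c t₀), φ t z) D t₀)
    (hL : ∀ t z, |φ t z - φ t₀ z| ≤ L * |t - t₀|) :
    HasDerivAt (fun t => ∫ z in a..(c t), φ t z) (D + c' * φ t₀ (c t₀)) t₀ := by
  set c₀ := c t₀ with hc₀
  have hB : HasDerivAt (fun u => ∫ z in c₀..u, φ t₀ z) (φ t₀ c₀) c₀ :=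
    intervalIntegral.integral_hasDerivAt_right ((hφc t₀).intervalIntegrable _ _)
      ((hφc t₀).stronglyMeasurable.stronglyMeasurableAtFilter) (hφc t₀).continuousAt
  have h2 : HasDerivAt (fun t => ∫ z in c₀..(c t), φ t₀ z) (φ t₀ c₀ * c') t₀ := hB.comp t₀ hc
  set E : ℝ → ℝ := fun t => ∫ z in c₀..(c t), (φ t z - φ t₀ z) with hE_def
  have hE : HasDerivAt E 0 t₀ := by
    rw [hasDerivAt_iff_isLittleO]
    have hE0 : E t₀ = 0 := by simp [hE_def]
    simp only [hE0, smul_zero, sub_zero]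
    rw [Asymptotics.isLittleO_iff]
    intro ε hε
    have htend : Filter.Tendsto (fun t => L * |c t - c₀|) (𝓝 t₀) (𝓝 0) := by
      have := hc.continuousAt.tendsto
      have h1 : Filter.Tendsto (fun t => c t - c₀) (𝓝 t₀) (𝓝 (c t₀ - c₀)) :=
        this.sub tendsto_const_nhds
      rw [← hc₀, sub_self] at h1
      simpa using (h1.abs.const_mul L)
    filter_upwards [htend.eventually_lt_const hε] with t ht
    have hb : ‖E t‖ ≤ (L * |t - t₀|) * |c t - c₀| := by
      apply intervalIntegral.norm_integral_le_of_norm_le_const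
      intro x _
      exact hL t x
    calc ‖E t‖ ≤ (L * |t - t₀|) * |c t - c₀| := hb
      _ = (L * |c t - c₀|) * ‖t - t₀‖ := by rw [Real.norm_eq_abs]; ring
      _ ≤ ε * ‖t - t₀‖ := by
          apply mul_le_mul_of_nonneg_right ht.le (norm_nonneg _)
  have key : ∀ t, ∫ z in a..(c t), φ t z
      = (∫ z in a..c₀, φ t z) + ((∫ z in c₀..(c t), φ t₀ z) + E t) := by
    intro t
    have i1 : IntervalIntegrable (φ t) volume a c₀ := (hφc t).intervalIntegrable _ _
    have i2 : IntervalIntegrable (φ t) volume c₀ (c t) := (hφc t).intervalIntegrable _ _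
    have i3 : IntervalIntegrable (φ t₀) volume c₀ (c t) := (hφc t₀).intervalIntegrable _ _
    have hEt : E t = (∫ z in c₀..(c t), φ t z) - (∫ z in c₀..(c t), φ t₀ z) :=
      intervalIntegral.integral_sub i2 i3
    rw [hEt, ← intervalIntegral.integral_add_adjacent_intervals i1 i2]
    ring
  have hsum := hA.add (h2.add hE)
  rw [add_zero] at hsum
  have heq : (fun t => ∫ z in a..(c t), φ t z)
      = fun t => (∫ z in a..c₀, φ t z) + ((∫ z in c₀..(c t), φ t₀ z) + E t) := funext key
  rw [heq]
  rw [show D + c' * φ t₀ c₀ = D + φ t₀ c₀ * c' by ring]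
  exact hsum

lemma aux_integrableOn_Iic {g : ℝ → ℝ} {b c : ℝ} (hg : Continuous g)
    (h0 : ∀ z, z ≤ -b → g z = 0) : IntegrableOn g (Iic c) := by
  rcases le_or_gt c (-b) with h | h
  · have hEq : EqOn g (fun _ => (0:ℝ)) (Iic c) := fun z hz => h0 z (le_trans hz h)
    rw [integrableOn_congr_fun hEq measurableSet_Iic]
    exact integrableOn_zero
  · rw [← Set.Iic_union_Ioc_eq_Iic h.le]
    apply IntegrableOn.union
    · have hEq : EqOn g (fun _ => (0:ℝ)) (Iic (-b)) := fun z hz => h0 z hz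
      rw [integrableOn_congr_fun hEq measurableSet_Iic]
      exact integrableOn_zero
    · exact hg.integrableOn_Ioc

lemma aux_Iic_eq_interval {g : ℝ → ℝ} {b c : ℝ} (hg : Continuous g)
    (h0 : ∀ z, z ≤ -b → g z = 0) (hbc : -b ≤ c) :
    ∫ z in Iic c, g z = ∫ z in (-b)..c, g z := by
  have hEq : EqOn g (fun _ => (0:ℝ)) (Iic (-b)) := fun z hz => h0 z hz
  have hi1 : IntegrableOn g (Iic (-b)) := aux_integrableOn_Iic hg h0
  rw [intervalIntegral.integral_of_le hbc, ← Set.Iic_union_Ioc_eq_Iic hbc,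
    setIntegral_union (Set.Iic_disjoint_Ioc le_rfl) measurableSet_Ioc hi1 hg.integrableOn_Ioc,
    setIntegral_congr_fun measurableSet_Iic hEq]
  simp

/-- Proposition 1 (CVaR gradient formula, 1-dimensional case). Let `Z` be a continuous real
random variable bounded in `[-b,b]` whose density `f(z;θ)` is parameterized by `θ ∈ ℝ^k`,
and let `α ∈ (0,1)`. Under the assumptions of the paper (boundedness and existence of the
derivatives of the VaR `ν` and the CVaR `Φ`, bounded likelihood ratio `(∂f/∂θ_j)/f`,
validity of differentiation under the integral sign, and the level condition
`∫_{-b}^{ν(θ)} f(z;θ) dz = α`), the CVaR gradient is the conditional expectation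
`∂Φ(θ)/∂θ_j = E^θ[ (∂ log f(Z;θ)/∂θ_j)·(Z − ν(θ)) | Z ≤ ν(θ) ]`. -/
theorem stmt_4 {Ω : Type*} [MeasurableSpace Ω] (k : ℕ) (b : ℝ) (α : ℝ)
    (hα : α ∈ Set.Ioo (0:ℝ) 1)
    (P : (Fin k → ℝ) → Measure Ω) (hP : ∀ θ, IsProbabilityMeasure (P θ))
    (Z : Ω → ℝ) (hZmeas : Measurable Z)
    (f : (Fin k → ℝ) → ℝ → ℝ) (f' : (Fin k → ℝ) → Fin k → ℝ → ℝ)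
    (ν Φ : (Fin k → ℝ) → ℝ) (ν' Φ' : (Fin k → ℝ) → Fin k → ℝ)
    -- `Z` has density `f(·;θ)` under `P θ`
    (hf_nonneg : ∀ θ z, 0 ≤ f θ z)
    (hdens : ∀ θ, Measure.map Z (P θ) = volume.withDensity fun z => ENNReal.ofReal (f θ z))
    -- `Z` is bounded in `[-b,b]`
    (hbdd : ∀ θ, P θ {ω | Z ω ∈ Set.Icc (-b) b} = 1)
    -- the α-VaR and the α-CVaR (conditional expectation of `Z` given `Z ≤ ν(θ)`)
    (hν : ∀ θ, ν θ = sInf {z | α ≤ (P θ {ω | Z ω ≤ z}).toReal})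
    (hΦ : ∀ θ, Φ θ =
      (∫ ω in {ω | Z ω ≤ ν θ}, Z ω ∂(P θ)) / (P θ {ω | Z ω ≤ ν θ}).toReal)
    -- Assumption 2: the gradients of the VaR and the CVaR exist and are bounded
    (hν' : ∀ θ j, HasDerivAt (fun t => ν (Function.update θ j t)) (ν' θ j) (θ j))
    (hν'_bdd : ∃ M, ∀ θ j, |ν' θ j| ≤ M)
    (hΦ' : ∀ θ j, HasDerivAt (fun t => Φ (Function.update θ j t)) (Φ' θ j) (θ j))
    (hΦ'_bdd : ∃ M, ∀ θ j, |Φ' θ j| ≤ M)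
    -- Assumption 3: `(∂f(z;θ)/∂θ_j)/f(z;θ)` exists and is bounded
    (hf' : ∀ θ j z, HasDerivAt (fun t => f (Function.update θ j t) z) (f' θ j z) (θ j))
    (hLR_bdd : ∃ M, ∀ θ j z, |f' θ j z / f θ z| ≤ M)
    -- smoothness making differentiation under the integral sign valid
    (hf_cont : ∀ θ, Continuous (f θ))
    (hf'_bdd : ∃ M, ∀ θ j z, |f' θ j z| ≤ M)
    (hf'_cont : ∀ θ j, Continuous (f' θ j))
    (hDUI : ∀ θ j c, HasDerivAt (fun t => ∫ z in (-b)..c, f (Function.update θ j t) z)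
      (∫ z in (-b)..c, f' θ j z) (θ j))
    (hDUI2 : ∀ θ j c, HasDerivAt (fun t => ∫ z in (-b)..c, z * f (Function.update θ j t) z)
      (∫ z in (-b)..c, z * f' θ j z) (θ j))
    -- level condition: `∫_{-b}^{ν(θ)} f(z;θ) dz = α` for all `θ`
    (hlevel : ∀ θ, ∫ z in (-b)..(ν θ), f θ z = α) :
    ∀ (θ : Fin k → ℝ) (j : Fin k),
      Φ' θ j = (∫ ω in {ω | Z ω ≤ ν θ},
          (f' θ j (Z ω) / f θ (Z ω)) * (Z ω - ν θ) ∂(P θ)) /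
        (P θ {ω | Z ω ≤ ν θ}).toReal := by
  intro θ j
  obtain ⟨Mf, hMf⟩ := hf'_bdd
  have hMf0 : 0 ≤ Mf := le_trans (abs_nonneg _) (hMf θ j 0)
  -- b is nonnegative
  have hb0 : 0 ≤ b := by
    have hne : {ω | Z ω ∈ Icc (-b) b}.Nonempty := by
      apply nonempty_of_measure_ne_zero (μ := P θ)
      rw [hbdd θ]; exact one_ne_zero
    obtain ⟨ω, hω⟩ := hne
    have h1 := hω.1; have h2 := hω.2; linarith
  -- the density vanishes outside [-b, b]
  have hf0 : ∀ θ' z, z ≤ -b ∨ b ≤ z → f θ' z = 0 := by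
    intro θ'
    haveI := hP θ'
    have hmeasIcc : MeasurableSet {ω | Z ω ∈ Icc (-b) b} := hZmeas measurableSet_Icc
    have hc0 : P θ' ({ω | Z ω ∈ Icc (-b) b}ᶜ) = 0 :=
      (prob_compl_eq_zero_iff hmeasIcc).mpr (hbdd θ')
    have hwd : ∫⁻ z in (Icc (-b) b)ᶜ, ENNReal.ofReal (f θ' z) ∂volume = 0 := by
      rw [← withDensity_apply _ measurableSet_Icc.compl, ← hdens θ',
        Measure.map_apply hZmeas measurableSet_Icc.compl]
      exact hc0
    have hae : ∀ᵐ z ∂volume, z ∈ (Icc (-b) b)ᶜ → f θ' z = 0 := by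
      have hmeas : Measurable fun z => ENNReal.ofReal (f θ' z) :=
        (hf_cont θ').measurable.ennreal_ofReal
      have h := (lintegral_eq_zero_iff hmeas).mp hwd
      rw [Filter.EventuallyEq, ae_restrict_iff' measurableSet_Icc.compl] at h
      filter_upwards [h] with z hz hz2
      have := hz hz2
      simp only [Pi.zero_apply, ENNReal.ofReal_eq_zero] at this
      exact le_antisymm this (hf_nonneg θ' z)
    have hsing : ∀ b' : ℝ, ∀ᵐ z ∂(volume : Measure ℝ), z ≠ b' := by
      intro b'
      rw [ae_iff]
      have : {z : ℝ | ¬z ≠ b'} = {b'} := by ext z; simp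
      rw [this]
      exact Real.volume_singleton
    have hEq1 : EqOn (f θ') (fun _ => (0:ℝ)) (Iic (-b)) := by
      refine Measure.eqOn_of_ae_eq (μ := (volume : Measure ℝ)) ?_ (hf_cont θ').continuousOn continuousOn_const ?_
      · filter_upwards [ae_restrict_mem measurableSet_Iic, ae_restrict_of_ae hae,
          ae_restrict_of_ae (hsing (-b))] with z hz1 hz2 hz3
        apply hz2
        simp only [mem_compl_iff, mem_Icc, not_and]
        intro hc
        exact absurd (lt_of_le_of_ne hz1 hz3) (not_lt.mpr hc)
      · rw [interior_Iic, closure_Iio]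
    have hEq2 : EqOn (f θ') (fun _ => (0:ℝ)) (Ici b) := by
      refine Measure.eqOn_of_ae_eq (μ := (volume : Measure ℝ)) ?_ (hf_cont θ').continuousOn continuousOn_const ?_
      · filter_upwards [ae_restrict_mem measurableSet_Ici, ae_restrict_of_ae hae,
          ae_restrict_of_ae (hsing b)] with z hz1 hz2 hz3
        apply hz2
        simp only [mem_compl_iff, mem_Icc, not_and]
        intro _
        exact not_le.mpr (lt_of_le_of_ne hz1 (Ne.symm hz3))
      · rw [interior_Ici, closure_Ioi]
    intro z hz
    rcases hz with hz | hz
    · exact hEq1 hz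
    · exact hEq2 hz
  -- the derivative of the density vanishes where the density vanishes
  have hf'0 : ∀ θ' (j' : Fin k) z, f θ' z = 0 → f' θ' j' z = 0 := by
    intro θ' j' z h0
    have hmin : IsLocalMin (fun t => f (Function.update θ' j' t) z) (θ' j') := by
      apply Filter.Eventually.of_forall
      intro t
      simp only [Function.update_eq_self, h0]
      exact hf_nonneg _ z
    exact hmin.hasDerivAt_eq_zero (hf' θ' j' z)
  -- f θ' is integrable
  have hint : ∀ θ', Integrable (f θ') (volume : Measure ℝ) := by
    intro θ'
    haveI := hP θ'
    have h1 : ∫⁻ z, ENNReal.ofReal (f θ' z) ∂volume = 1 := by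
      have h2 : Measure.map Z (P θ') Set.univ = 1 := by
        rw [Measure.map_apply hZmeas MeasurableSet.univ, preimage_univ]
        exact measure_univ
      rwa [hdens θ', withDensity_apply _ MeasurableSet.univ, Measure.restrict_univ] at h2
    refine ⟨(hf_cont θ').aestronglyMeasurable, ?_⟩
    rw [hasFiniteIntegral_iff_ofReal (Filter.Eventually.of_forall (hf_nonneg θ'))]
    rw [h1]; exact ENNReal.one_lt_top
  -- the VaR is at least -b
  have hν_ge : ∀ θ', -b ≤ ν θ' := by
    intro θ'
    by_contra h
    push_neg at h
    have hl := hlevel θ'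
    rw [intervalIntegral.integral_symm] at hl
    have hnn : 0 ≤ ∫ z in (ν θ')..(-b), f θ' z :=
      intervalIntegral.integral_nonneg h.le (fun u _ => hf_nonneg θ' u)
    have := hα.1
    linarith
  -- the measure of the event {Z ≤ ν θ'} is α
  have hPmeas : ∀ θ', P θ' {ω | Z ω ≤ ν θ'} = ENNReal.ofReal α := by
    intro θ'
    have hset : {ω | Z ω ≤ ν θ'} = Z ⁻¹' (Iic (ν θ')) := rfl
    rw [hset, ← Measure.map_apply hZmeas measurableSet_Iic, hdens θ',
      withDensity_apply _ measurableSet_Iic,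
      ← ofReal_integral_eq_lintegral_ofReal ((hint θ').integrableOn)
        (ae_restrict_of_ae (Filter.Eventually.of_forall (hf_nonneg θ')))]
    congr 1
    rw [aux_Iic_eq_interval (hf_cont θ') (fun z hz => hf0 θ' z (Or.inl hz)) (hν_ge θ')]
    exact hlevel θ'
  -- the CVaR formula in terms of an interval integral
  have hΦeq : ∀ θ', Φ θ' = (∫ z in (-b)..(ν θ'), z * f θ' z) / α := by
    intro θ'
    rw [hΦ θ', hPmeas θ', ENNReal.toReal_ofReal hα.1.le]
    congr 1
    calc ∫ ω in {ω | Z ω ≤ ν θ'}, Z ω ∂(P θ')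
        = ∫ z in Iic (ν θ'), z ∂(Measure.map Z (P θ')) :=
          (setIntegral_map measurableSet_Iic aestronglyMeasurable_id hZmeas.aemeasurable).symm
      _ = ∫ z in Iic (ν θ'), (f θ' z).toNNReal • z ∂volume := by
          rw [hdens θ']
          exact setIntegral_withDensity_eq_setIntegral_smul
            ((hf_cont θ').measurable.real_toNNReal) _ measurableSet_Iic
      _ = ∫ z in Iic (ν θ'), z * f θ' z ∂volume := by
          apply setIntegral_congr_fun measurableSet_Iic
          intro z _
          simp only [NNReal.smul_def, smul_eq_mul, Real.coe_toNNReal _ (hf_nonneg θ' z)]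
          ring
      _ = ∫ z in (-b)..(ν θ'), z * f θ' z :=
          aux_Iic_eq_interval (continuous_id.mul (hf_cont θ'))
            (fun z hz => by rw [hf0 θ' z (Or.inl hz), mul_zero]) (hν_ge θ')
  -- the uniform Lipschitz estimate in the parameter
  have hderiv_t : ∀ (z t' : ℝ), HasDerivAt (fun t => f (Function.update θ j t) z)
      (f' (Function.update θ j t') j z) t' := by
    intro z t'
    have h := hf' (Function.update θ j t') j z
    simpa only [Function.update_idem, Function.update_self] using h
  have hLipf : ∀ t z, |f (Function.update θ j t) z - f (Function.update θ j (θ j)) z|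
      ≤ Mf * |t - θ j| := by
    intro t z
    have := Convex.norm_image_sub_le_of_norm_hasDerivWithin_le
      (f := fun t => f (Function.update θ j t) z)
      (f' := fun t' => f' (Function.update θ j t') j z) (s := Set.univ)
      (fun x _ => (hderiv_t z x).hasDerivWithinAt)
      (fun x _ => by rw [Real.norm_eq_abs]; exact hMf _ j z)
      convex_univ (mem_univ (θ j)) (mem_univ t)
    simpa [Real.norm_eq_abs] using this
  -- derivative of the level condition
  have hD1 : HasDerivAt (fun t => ∫ z in (-b)..(ν (Function.update θ j t)),
      f (Function.update θ j t) z)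
      ((∫ z in (-b)..(ν θ), f' θ j z) + ν' θ j * f θ (ν θ)) (θ j) := by
    have h := comp_deriv_aux (φ := fun t z => f (Function.update θ j t) z) (a := -b)
      (c := fun t => ν (Function.update θ j t)) (c' := ν' θ j)
      (D := ∫ z in (-b)..(ν θ), f' θ j z) (L := Mf)
      (hν' θ j) (fun t => hf_cont _) ?_ ?_
    · simpa only [Function.update_eq_self] using h
    · simp only [Function.update_eq_self]
      exact hDUI θ j (ν θ)
    · intro t z
      exact hLipf t z
  have hI1 : (∫ z in (-b)..(ν θ), f' θ j z) + ν' θ j * f θ (ν θ) = 0 := by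
    have hconst : HasDerivAt (fun _ : ℝ => α)
        ((∫ z in (-b)..(ν θ), f' θ j z) + ν' θ j * f θ (ν θ)) (θ j) :=
      hD1.congr_of_eventuallyEq (Filter.Eventually.of_forall fun t => (hlevel _).symm)
    exact hconst.unique (hasDerivAt_const _ _)
  -- derivative of the CVaR numerator
  have hD2 : HasDerivAt (fun t => ∫ z in (-b)..(ν (Function.update θ j t)),
      z * f (Function.update θ j t) z)
      ((∫ z in (-b)..(ν θ), z * f' θ j z) + ν' θ j * (ν θ * f θ (ν θ))) (θ j) := by
    have h := comp_deriv_aux (φ := fun t z => z * f (Function.update θ j t) z) (a := -b)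
      (c := fun t => ν (Function.update θ j t)) (c' := ν' θ j)
      (D := ∫ z in (-b)..(ν θ), z * f' θ j z) (L := b * Mf)
      (hν' θ j) (fun t => continuous_id.mul (hf_cont _)) ?_ ?_
    · simpa only [Function.update_eq_self] using h
    · simp only [Function.update_eq_self]
      exact hDUI2 θ j (ν θ)
    · intro t z
      show |z * f (Function.update θ j t) z - z * f (Function.update θ j (θ j)) z|
        ≤ b * Mf * |t - θ j|
      rcases le_or_gt |z| b with hzb | hzb
      · calc |z * f (Function.update θ j t) z - z * f (Function.update θ j (θ j)) z|
            = |z| * |f (Function.update θ j t) z - f (Function.update θ j (θ j)) z| := by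
              rw [← abs_mul]; ring_nf
          _ ≤ b * (Mf * |t - θ j|) := by
              apply mul_le_mul hzb (hLipf t z) (abs_nonneg _) hb0
          _ = b * Mf * |t - θ j| := by ring
      · have hcase : z ≤ -b ∨ b ≤ z := by
          rcases lt_abs.mp hzb with h | h
          · exact Or.inr h.le
          · exact Or.inl (by linarith)
        rw [hf0 (Function.update θ j t) z hcase, hf0 (Function.update θ j (θ j)) z hcase]
        simp only [mul_zero, sub_zero, abs_zero]
        positivity
  -- the value of Φ'
  have hΦD : HasDerivAt (fun t => Φ (Function.update θ j t))
      (((∫ z in (-b)..(ν θ), z * f' θ j z) + ν' θ j * (ν θ * f θ (ν θ))) / α) (θ j) :=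
    (hD2.div_const α).congr_of_eventuallyEq (Filter.Eventually.of_forall fun t => hΦeq _)
  have hΦ'val : Φ' θ j
      = ((∫ z in (-b)..(ν θ), z * f' θ j z) + ν' θ j * (ν θ * f θ (ν θ))) / α :=
    (hΦ' θ j).unique hΦD
  -- the right-hand side
  have hRHS : (∫ ω in {ω | Z ω ≤ ν θ}, (f' θ j (Z ω) / f θ (Z ω)) * (Z ω - ν θ) ∂(P θ))
      = (∫ z in (-b)..(ν θ), z * f' θ j z) - ν θ * (∫ z in (-b)..(ν θ), f' θ j z) := by
    have hg_meas : AEStronglyMeasurable (fun z => (f' θ j z / f θ z) * (z - ν θ))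
        (Measure.map Z (P θ)) :=
      (((hf'_cont θ j).measurable.div (hf_cont θ).measurable).mul
        (measurable_id.sub measurable_const)).aestronglyMeasurable
    calc ∫ ω in {ω | Z ω ≤ ν θ}, (f' θ j (Z ω) / f θ (Z ω)) * (Z ω - ν θ) ∂(P θ)
        = ∫ z in Iic (ν θ), (f' θ j z / f θ z) * (z - ν θ) ∂(Measure.map Z (P θ)) :=
          (setIntegral_map measurableSet_Iic hg_meas hZmeas.aemeasurable).symm
      _ = ∫ z in Iic (ν θ),
            (f θ z).toNNReal • ((f' θ j z / f θ z) * (z - ν θ)) ∂volume := by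
          rw [hdens θ]
          exact setIntegral_withDensity_eq_setIntegral_smul
            ((hf_cont θ).measurable.real_toNNReal) _ measurableSet_Iic
      _ = ∫ z in Iic (ν θ), f' θ j z * (z - ν θ) ∂volume := by
          apply setIntegral_congr_fun measurableSet_Iic
          intro z _
          simp only [NNReal.smul_def, smul_eq_mul, Real.coe_toNNReal _ (hf_nonneg θ z)]
          rcases eq_or_ne (f θ z) 0 with h | h
          · rw [h, hf'0 θ j z h]; ring
          · field_simp
      _ = ∫ z in (-b)..(ν θ), f' θ j z * (z - ν θ) :=
          aux_Iic_eq_interval ((hf'_cont θ j).mul (continuous_id.sub continuous_const))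
            (fun z hz => by rw [hf'0 θ j z (hf0 θ z (Or.inl hz)), zero_mul]) (hν_ge θ)
      _ = (∫ z in (-b)..(ν θ), z * f' θ j z) - ν θ * (∫ z in (-b)..(ν θ), f' θ j z) := by
          have h1 : IntervalIntegrable (fun z => z * f' θ j z) volume (-b) (ν θ) :=
            (continuous_id.mul (hf'_cont θ j)).intervalIntegrable _ _
          have h2 : IntervalIntegrable (fun z => ν θ * f' θ j z) volume (-b) (ν θ) :=
            (continuous_const.mul (hf'_cont θ j)).intervalIntegrable _ _
          rw [show (fun z => f' θ j z * (z - ν θ)) = fun z => z * f' θ j z - ν θ * f' θ j z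
            from funext fun z => by ring]
          rw [intervalIntegral.integral_sub h1 h2, intervalIntegral.integral_const_mul]
  rw [hΦ'val, hPmeas θ, ENNReal.toReal_ofReal hα.1.le, hRHS]
  congr 1
  have h2 : ν' θ j * (ν θ * f θ (ν θ)) = ν θ * (ν' θ j * f θ (ν θ)) := by ring
  rw [h2]
  have h3 : ν' θ j * f θ (ν θ) = -(∫ z in (-b)..(ν θ), f' θ j z) := by linarith
  rw [h3]
  ring
end

section
/- (Necessity of the VaR baseline.) Let Z be a real random variable with the Gaussian distribution N(θ,1) of mean θ ∈ ℝ and variance 1, and let α = 1/2, so that ν_α(Z;θ) = θ and ∂log f_Z(z;θ)/∂θ = z − θ. Then the expectation of the baseline-free likelihood-ratio quantity is E[(∂log f_Z(Z;θ)/∂θ)·Z | Z ≤ ν_α(Z;θ)] = E[(Z − θ)·Z | Z ≤ θ] = 1 − √(2/π)·θ. Hence it differs from the true CVaR gradient (which equals 1, independent of θ) by the term −√(2/π)·θ, whose absolute value is unbounded in θ; in particular, for |θ| large enough the baseline-free estimator's expectation has the opposite sign to the true gradient. -/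
open MeasureTheory ProbabilityTheory Real Filter Set
open scoped ENNReal NNReal

lemma aux_tendsto_mul_exp_atTop :
    Tendsto (fun x : ℝ => x * Real.exp (-x ^ 2 / 2)) atTop (nhds 0) := by
  have hlin : Tendsto (fun x : ℝ => -(1/2 : ℝ) * x) atTop atBot := by
    have := (tendsto_id (α := ℝ)).atTop_div_const (show (0:ℝ) < 2 by norm_num)
    have h2 := tendsto_neg_atTop_atBot.comp this
    refine h2.congr fun x => ?_
    simp [Function.comp]; ring
  have h := (rpow_mul_exp_neg_mul_sq_isLittleO_exp_neg (by norm_num : (0:ℝ) < 1/2)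
    1).trans_tendsto (Real.tendsto_exp_atBot.comp hlin)
  refine h.congr fun x => ?_
  rw [Real.rpow_one, show -(1/2 : ℝ) * x ^ 2 = -x ^ 2 / 2 by ring]

lemma aux_sq_atBot : Tendsto (fun x : ℝ => x ^ 2) atBot atTop := by
  have := (tendsto_pow_atTop (two_ne_zero)).comp tendsto_neg_atBot_atTop (α := ℝ)
  refine this.congr fun x => ?_
  simp [neg_sq]

lemma aux_tendsto_exp_atBot :
    Tendsto (fun x : ℝ => Real.exp (-x ^ 2 / 2)) atBot (nhds 0) := by
  refine Real.tendsto_exp_atBot.comp ?_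
  have h1 : Tendsto (fun x : ℝ => x ^ 2 / 2) atBot atTop :=
    aux_sq_atBot.atTop_div_const two_pos
  have := tendsto_neg_atTop_atBot.comp h1
  refine this.congr fun x => ?_
  simp [neg_div]

lemma aux_tendsto_mul_exp_atBot :
    Tendsto (fun x : ℝ => x * Real.exp (-x ^ 2 / 2)) atBot (nhds 0) := by
  have h := (aux_tendsto_mul_exp_atTop.neg).comp tendsto_neg_atBot_atTop
  rw [neg_zero] at h
  refine h.congr fun x => ?_
  simp [Function.comp, neg_sq]

lemma aux_tendstoF (θ : ℝ) :
    Tendsto (fun z : ℝ => z * Real.exp (-(z - θ) ^ 2 / 2)) atBot (nhds 0) := by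
  have h1 : Tendsto (fun z : ℝ => z - θ) atBot atBot := by
    have := tendsto_atBot_add_const_right atBot (-θ) (tendsto_id (α := ℝ))
    refine this.congr fun x => ?_
    rw [sub_eq_add_neg]; rfl
  have hA := aux_tendsto_mul_exp_atBot.comp h1
  have hB := (aux_tendsto_exp_atBot.comp h1).const_mul θ
  have := hA.add hB
  rw [mul_zero, add_zero] at this
  refine this.congr fun z => ?_
  simp only [Function.comp]
  ring

lemma int_poly_gauss (θ : ℝ) :
    Integrable (fun z : ℝ => ((z - θ) * z - 1) * Real.exp (-(z - θ) ^ 2 / 2)) := by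
  have h2 : Integrable (fun y : ℝ => y ^ 2 * Real.exp (-(1/2 : ℝ) * y ^ 2)) := by
    have := integrable_rpow_mul_exp_neg_mul_sq (by norm_num : (0:ℝ) < 1/2)
      (s := ((2:ℕ):ℝ)) (by norm_num)
    exact this.congr (Filter.Eventually.of_forall fun x => by
      simp [Real.rpow_natCast])
  have h1 : Integrable (fun y : ℝ => y * Real.exp (-(1/2 : ℝ) * y ^ 2)) :=
    integrable_mul_exp_neg_mul_sq (by norm_num)
  have h0 : Integrable (fun y : ℝ => Real.exp (-(1/2 : ℝ) * y ^ 2)) :=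
    integrable_exp_neg_mul_sq (by norm_num)
  have base : Integrable (fun y : ℝ => (y ^ 2 + θ * y - 1) * Real.exp (-(1/2 : ℝ) * y ^ 2)) := by
    have := (h2.add (h1.const_mul θ)).sub h0
    exact this.congr (Filter.Eventually.of_forall fun y => by
      simp only [Pi.add_apply, Pi.sub_apply]; ring)
  have := base.comp_sub_right θ
  refine this.congr (Filter.Eventually.of_forall fun z => ?_)
  show ((z - θ) ^ 2 + θ * (z - θ) - 1) * Real.exp (-(1/2 : ℝ) * (z - θ) ^ 2)
      = ((z - θ) * z - 1) * Real.exp (-(z - θ) ^ 2 / 2)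
  rw [show -(1/2 : ℝ) * (z - θ) ^ 2 = -(z - θ) ^ 2 / 2 by ring]
  ring

lemma int_f' (θ : ℝ) :
    Integrable (fun z : ℝ => ((z - θ) * z - 1) * gaussianPDFReal θ 1 z) := by
  have := (int_poly_gauss θ).const_mul ((Real.sqrt (2 * Real.pi))⁻¹)
  refine this.congr (Filter.Eventually.of_forall fun z => ?_)
  simp only [gaussianPDFReal, NNReal.coe_one, mul_one]
  ring

lemma hasDerivF (θ z : ℝ) :
    HasDerivAt (fun z : ℝ => -(Real.sqrt (2 * Real.pi))⁻¹ * (z * Real.exp (-(z - θ) ^ 2 / 2)))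
      (((z - θ) * z - 1) * gaussianPDFReal θ 1 z) z := by
  have hsub : HasDerivAt (fun z : ℝ => z - θ) 1 z := (hasDerivAt_id z).sub_const θ
  have h1 : HasDerivAt (fun z : ℝ => -(z - θ) ^ 2 / 2) (-(z - θ)) z := by
    have := ((hsub.pow 2).neg).div_const 2
    refine this.congr_deriv ?_
    simp; ring
  have h2 := h1.exp
  have h3 := (hasDerivAt_id z).mul h2
  have h4 := h3.const_mul (-(Real.sqrt (2 * Real.pi))⁻¹)
  refine h4.congr_deriv ?_
  simp only [gaussianPDFReal, NNReal.coe_one, mul_one, id_eq, one_mul]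
  ring

lemma gauss_measure_Iic_self (θ : ℝ) : gaussianReal θ 1 (Set.Iic θ) = 1/2 := by
  have hmap1 : (gaussianReal θ 1).map (fun z => -1 * z) = gaussianReal (-θ) 1 := by
    rw [gaussianReal_map_const_mul (-1)]
    congr 1
    · ring
    · rw [mul_one]
      exact NNReal.coe_injective (by norm_num)
  have hmap : (gaussianReal θ 1).map (fun z => 2 * θ - z) = gaussianReal θ 1 := by
    have hcomp : (fun z : ℝ => 2 * θ - z) = (fun y => y + 2 * θ) ∘ (fun z : ℝ => -1 * z) := by
      funext z; simp [Function.comp]; ring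
    rw [hcomp, ← Measure.map_map (measurable_add_const (2 * θ))
      (measurable_const_mul (-1)), hmap1, gaussianReal_map_add_const]
    congr 1
    ring
  have hIic : gaussianReal θ 1 (Set.Iic θ) = gaussianReal θ 1 (Set.Ici θ) := by
    conv_lhs => rw [← hmap]
    rw [Measure.map_apply (by fun_prop : Measurable fun z : ℝ => 2 * θ - z) measurableSet_Iic]
    congr 1
    ext z
    simp only [Set.mem_preimage, Set.mem_Iic, Set.mem_Ici]
    constructor <;> intro h <;> linarith
  have hsing : gaussianReal θ 1 {θ} = 0 :=
    gaussianReal_absolutelyContinuous θ one_ne_zero (measure_singleton θ)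
  have hIoi : gaussianReal θ 1 (Set.Ici θ) = gaussianReal θ 1 (Set.Ioi θ) := by
    refine le_antisymm ?_ (measure_mono Set.Ioi_subset_Ici_self)
    calc gaussianReal θ 1 (Set.Ici θ) = gaussianReal θ 1 (Set.Ioi θ ∪ {θ}) := by
          rw [Set.Ioi_union_left]
      _ ≤ gaussianReal θ 1 (Set.Ioi θ) + gaussianReal θ 1 {θ} := measure_union_le _ _
      _ = gaussianReal θ 1 (Set.Ioi θ) := by rw [hsing, add_zero]
  have hcompl : gaussianReal θ 1 (Set.Iic θ) + gaussianReal θ 1 (Set.Ioi θ) = 1 := by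
    have h := measure_add_measure_compl (μ := gaussianReal θ 1) (s := Set.Iic θ)
      measurableSet_Iic
    rwa [Set.compl_Iic, measure_univ] at h
  have h2 : 2 * gaussianReal θ 1 (Set.Iic θ) = 1 := by
    rw [two_mul]
    nth_rewrite 2 [hIic]
    rw [hIoi]
    exact hcompl
  rw [ENNReal.eq_div_iff two_ne_zero ENNReal.ofNat_ne_top]
  exact h2

lemma gauss_setInt (θ : ℝ) (f : ℝ → ℝ) :
    ∫ z in Set.Iic θ, f z ∂(gaussianReal θ 1)
      = ∫ z in Set.Iic θ, gaussianPDFReal θ 1 z * f z := by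
  rw [gaussianReal_of_var_ne_zero θ one_ne_zero]
  have hd : gaussianPDF θ 1 = fun x => ((Real.toNNReal (gaussianPDFReal θ 1 x) : ℝ≥0) : ENNReal) := by
    funext x
    rw [gaussianPDF, ENNReal.ofReal]
  rw [hd, setIntegral_withDensity_eq_setIntegral_smul
    ((measurable_gaussianPDFReal θ 1).real_toNNReal) f measurableSet_Iic]
  refine integral_congr_ae (Filter.Eventually.of_forall fun x => ?_)
  simp [NNReal.smul_def, Real.coe_toNNReal _ (gaussianPDFReal_nonneg θ 1 x)]

lemma pdf_Iic (θ : ℝ) : ∫ z in Set.Iic θ, gaussianPDFReal θ 1 z = 1/2 := by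
  have h := gaussianReal_apply_eq_integral θ one_ne_zero (Set.Iic θ)
  rw [gauss_measure_Iic_self θ] at h
  have hnn : 0 ≤ ∫ z in Set.Iic θ, gaussianPDFReal θ 1 z :=
    integral_nonneg fun z => gaussianPDFReal_nonneg θ 1 z
  have h12 : (1/2 : ENNReal) = ENNReal.ofReal (1/2) := by
    rw [ENNReal.ofReal_div_of_pos (by norm_num)]
    norm_num
  rw [h12] at h
  have := (ENNReal.ofReal_eq_ofReal_iff (by norm_num) hnn).mp h
  linarith

lemma key_integral (θ : ℝ) :
    ∫ z in Set.Iic θ, ((z - θ) * z - 1) * gaussianPDFReal θ 1 z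
      = -(Real.sqrt (2 * Real.pi))⁻¹ * θ := by
  have htend : Tendsto
      (fun z : ℝ => -(Real.sqrt (2 * Real.pi))⁻¹ * (z * Real.exp (-(z - θ) ^ 2 / 2)))
      atBot (nhds 0) := by
    have := (aux_tendstoF θ).const_mul (-(Real.sqrt (2 * Real.pi))⁻¹)
    rwa [mul_zero] at this
  have := integral_Iic_of_hasDerivAt_of_tendsto' (a := θ)
    (fun z _ => hasDerivF θ z) (int_f' θ).integrableOn htend
  rw [this]
  simp

/-- Necessity of the VaR baseline. For `Z ~ N(θ,1)` and `α = 1/2` (so `ν_α(Z;θ) = θ` and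
`∂log f_Z(z;θ)/∂θ = z − θ`), the expectation of the baseline-free likelihood-ratio quantity
is `E[(Z − θ)·Z | Z ≤ θ] = 1 − √(2/π)·θ`. Hence it differs from the true CVaR gradient
(which equals `1`) by `−√(2/π)·θ`, whose absolute value is unbounded in `θ`; in particular
for `θ > √(π/2)` the baseline-free expectation is negative, i.e., has the opposite sign to
the true gradient. -/
theorem stmt_13 :
    (∀ θ : ℝ, (∫ z in Set.Iic θ, (z - θ) * z ∂(gaussianReal θ 1)) /
        ((gaussianReal θ 1) (Set.Iic θ)).toReal = 1 - Real.sqrt (2 / Real.pi) * θ) ∧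
    (∀ C : ℝ, ∃ θ : ℝ, C < |(-(Real.sqrt (2 / Real.pi) * θ))|) ∧
    (∀ θ : ℝ, Real.sqrt (Real.pi / 2) < θ → 1 - Real.sqrt (2 / Real.pi) * θ < 0) := by
  have hπ := Real.pi_pos
  have hsqrt_pos : 0 < Real.sqrt (2 * Real.pi) := Real.sqrt_pos.mpr (by positivity)
  have hs : Real.sqrt (2 / Real.pi) = 2 / Real.sqrt (2 * Real.pi) := by
    rw [eq_div_iff hsqrt_pos.ne', ← Real.sqrt_mul (by positivity),
      show (2 / Real.pi) * (2 * Real.pi) = 2 ^ 2 by field_simp,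
      Real.sqrt_sq (by norm_num)]
  refine ⟨fun θ => ?_, fun C => ?_, fun θ hθ => ?_⟩
  · have hInt : ∫ z in Set.Iic θ, (z - θ) * z ∂(gaussianReal θ 1)
        = 1/2 - (Real.sqrt (2 * Real.pi))⁻¹ * θ := by
      rw [gauss_setInt θ (fun z => (z - θ) * z)]
      have hsplit : ∀ z : ℝ, gaussianPDFReal θ 1 z * ((z - θ) * z)
          = ((z - θ) * z - 1) * gaussianPDFReal θ 1 z + gaussianPDFReal θ 1 z := by
        intro z; ring
      rw [integral_congr_ae (Filter.Eventually.of_forall hsplit),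
        integral_add (int_f' θ).integrableOn (integrable_gaussianPDFReal θ 1).integrableOn,
        key_integral θ, pdf_Iic θ]
      ring
    rw [hInt, gauss_measure_Iic_self θ]
    rw [show ((1/2 : ENNReal)).toReal = 1/2 by simp [ENNReal.toReal_div]]
    rw [hs]
    field_simp
  · refine ⟨(|C| + 1) / Real.sqrt (2 / Real.pi), ?_⟩
    have hp : 0 < Real.sqrt (2 / Real.pi) := Real.sqrt_pos.mpr (by positivity)
    rw [abs_neg, mul_div_cancel₀ _ hp.ne', abs_of_nonneg (by positivity)]
    calc C ≤ |C| := le_abs_self C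
    _ < |C| + 1 := by linarith
  · have h1 : Real.sqrt (2 / Real.pi) * Real.sqrt (Real.pi / 2) = 1 := by
      rw [← Real.sqrt_mul (by positivity), show (2 / Real.pi) * (Real.pi / 2) = 1 by field_simp,
        Real.sqrt_one]
    have hp : 0 < Real.sqrt (2 / Real.pi) := Real.sqrt_pos.mpr (by positivity)
    have := mul_lt_mul_of_pos_left hθ hp
    rw [h1] at this
    linarith
end
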